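/- For every IETWGFA M, there exists an IETWSFA M' = (Q', Σ, R', s', F') such that no rule has s' as its right-hand side, every ε-rule of M' has left-hand side s', and L(M') = L(M')_init-even = L(M)_init-even. -/

import Mathlib

namespace IETW

/-- An input-erasing two-way general finite automaton (IETWGFA). -/
structure GFA (T : Type) : Type 1 where
  Q : Type
  finQ : Finite Q
  start : Q
  accept : Set Q
  /-- Left rules: `(x, q, p)` represents `x q → p`. -/
  ruleL : Set (List T × Q × Q)
  /-- Right rules: `(q, x, p)` represents `q x → p`. -/
  ruleR : Set (Q × List T × Q)
  finL : ruleL.Finite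
  finR : ruleR.Finite

variable {T : Type}

/-- One move, labelled by its direction (`true` = left) and the number of erased symbols. -/
inductive GFA.Step (M : GFA T) :
    List T × M.Q × List T → Bool × ℕ → List T × M.Q × List T → Prop
  | left {u v x : List T} {q p : M.Q} (h : (x, q, p) ∈ M.ruleL) :
      GFA.Step M (u ++ x, q, v) (true, x.length) (u, p, v)
  | right {u v x : List T} {q p : M.Q} (h : (q, x, p) ∈ M.ruleR) :
      GFA.Step M (u, q, x ++ v) (false, x.length) (u, p, v)

/-- A computation along a list of move labels. -/
inductive GFA.Chain (M : GFA T) :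
    List T × M.Q × List T → List (Bool × ℕ) → List T × M.Q × List T → Prop
  | nil (c) : GFA.Chain M c [] c
  | cons {c c' c'' l ls} (h : GFA.Step M c l c') (h' : GFA.Chain M c' ls c'') :
      GFA.Chain M c (l :: ls) c''

/-- `L(M)`. -/
def GFA.lang (M : GFA T) : Set (List T) :=
  {w | ∃ x y ls f, w = x ++ y ∧ f ∈ M.accept ∧ M.Chain (x, M.start, y) ls ([], f, [])}

/-- The moves strictly alternate between left and right. -/
def Alternating (ls : List (Bool × ℕ)) : Prop :=
  ls.Chain' (fun a b => a.1 ≠ b.1)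

/-- An even computation: alternating, of even length, and each odd-indexed move reads
the same number of symbols as the following move. -/
def EvenTrace (ls : List (Bool × ℕ)) : Prop :=
  ls.length % 2 = 0 ∧ Alternating ls ∧
    ∀ i, 2 * i + 1 < ls.length →
      (ls.getD (2 * i) (true, 0)).2 = (ls.getD (2 * i + 1) (true, 0)).2

/-- An initialized even computation: one move followed by an even computation. -/
def InitEvenTrace (ls : List (Bool × ℕ)) : Prop :=
  ∃ l ls', ls = l :: ls' ∧ EvenTrace ls'

/-- `L(M)_alt`. -/
def GFA.langAlt (M : GFA T) : Set (List T) :=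
  {w | ∃ x y ls f, w = x ++ y ∧ f ∈ M.accept ∧ Alternating ls ∧
    M.Chain (x, M.start, y) ls ([], f, [])}

/-- `L(M)_even`. -/
def GFA.langEven (M : GFA T) : Set (List T) :=
  {w | ∃ x y ls f, w = x ++ y ∧ f ∈ M.accept ∧ EvenTrace ls ∧
    M.Chain (x, M.start, y) ls ([], f, [])}

/-- `L(M)_init-even`. -/
def GFA.langInitEven (M : GFA T) : Set (List T) :=
  {w | ∃ x y ls f, w = x ++ y ∧ f ∈ M.accept ∧ InitEvenTrace ls ∧
    M.Chain (x, M.start, y) ls ([], f, [])}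

/-- All rules read at most one symbol (IETWSFA). -/
def GFA.Simple (M : GFA T) : Prop :=
  (∀ r ∈ M.ruleL, r.1.length ≤ 1) ∧ (∀ r ∈ M.ruleR, r.2.1.length ≤ 1)

/-- No ε-rules: every rule reads at least one symbol. -/
def GFA.EpsFree (M : GFA T) : Prop :=
  (∀ r ∈ M.ruleL, r.1 ≠ ([] : List T)) ∧ (∀ r ∈ M.ruleR, r.2.1 ≠ ([] : List T))

/-- A linear grammar: rules `A → x B y` (encoded `(A, x, some (B, y))`)
or `A → x` (encoded `(A, x, none)`). -/
structure LG (T : Type) : Type 1 where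
  N : Type
  finN : Finite N
  start : N
  rules : Set (N × List T × Option (N × List T))
  finR : rules.Finite

/-- One derivation step on sentential forms `u A v`. -/
inductive LG.Der (G : LG T) :
    List T × G.N × List T → List T × G.N × List T → Prop
  | step {u v x y : List T} {A B : G.N} (h : (A, x, some (B, y)) ∈ G.rules) :
      LG.Der G (u, A, v) (u ++ x, B, y ++ v)

/-- `L(G)`. -/
def LG.lang (G : LG T) : Set (List T) :=
  {w | ∃ u A v x, Relation.ReflTransGen G.Der ([], G.start, []) (u, A, v) ∧
    (A, x, none) ∈ G.rules ∧ w = u ++ x ++ v}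

/-- Even linear grammar: `|x| = |y|` in every rule `A → x B y`. -/
def LG.Even (G : LG T) : Prop :=
  ∀ r ∈ G.rules, ∀ B (y : List T), r.2.2 = some (B, y) → r.2.1.length = y.length

-- ==================== auxiliary trace lemmas ====================

inductive Pairs (t : Bool) : List (Bool × ℕ) → Prop
  | nil : Pairs t []
  | cons (n : ℕ) {ls : List (Bool × ℕ)} (h : Pairs t ls) :
      Pairs t ((t, n) :: (!t, n) :: ls)

lemma Pairs.head_fst {t : Bool} {ls : List (Bool × ℕ)} (h : Pairs t ls) :
    ∀ x ∈ ls.head?, (x : Bool × ℕ).1 = t := by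
  cases h with
  | nil => simp
  | cons n h => simp

lemma Pairs.evenTrace {t : Bool} {ls : List (Bool × ℕ)} (h : Pairs t ls) : EvenTrace ls := by
  induction h with
  | nil => exact ⟨rfl, List.isChain_nil, fun i hi => by simp at hi⟩
  | @cons n ls h ih =>
    obtain ⟨h1, h2, h3⟩ := ih
    refine ⟨by simp; omega, ?_, ?_⟩
    · rw [Alternating, List.Chain', List.isChain_cons_cons]
      refine ⟨by simp, ?_⟩
      rw [List.isChain_cons]
      exact ⟨fun y hy => by simp [h.head_fst y hy], h2⟩
    · intro i hi
      cases i with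
      | zero => simp
      | succ i =>
        have e1 : 2 * (i + 1) = (2 * i) + 1 + 1 := by ring
        rw [e1, List.getD_cons_succ, List.getD_cons_succ, List.getD_cons_succ,
          List.getD_cons_succ]
        exact h3 i (by simp at hi; omega)

lemma evenTrace_pairs : ∀ (ls : List (Bool × ℕ)), EvenTrace ls → ∃ t, Pairs t ls
  | [], _ => ⟨true, .nil⟩
  | [x], h => by simp [EvenTrace] at h
  | x :: y :: ls, h => by
    obtain ⟨xb, xn⟩ := x
    obtain ⟨yb, yn⟩ := y
    obtain ⟨h1, h2, h3⟩ := h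
    have hxy : xb ≠ yb := (List.isChain_cons_cons.mp h2).1
    have h2' : Alternating ((yb, yn) :: ls) := (List.isChain_cons_cons.mp h2).2
    have hcnt : xn = yn := by simpa using h3 0 (by simp)
    have hrest : EvenTrace ls := by
      refine ⟨by simp at h1; omega, h2'.tail, fun i hi => ?_⟩
      have e1 : 2 * (i + 1) = (2 * i) + 1 + 1 := by ring
      have := h3 (i + 1) (by simp; omega)
      rwa [e1, List.getD_cons_succ, List.getD_cons_succ, List.getD_cons_succ,
        List.getD_cons_succ] at this
    obtain ⟨t', hp⟩ := evenTrace_pairs ls hrest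
    subst hcnt
    have hyb : yb = !xb := by revert hxy; cases xb <;> cases yb <;> decide
    subst hyb
    refine ⟨xb, ?_⟩
    cases ls with
    | nil => exact Pairs.cons xn .nil
    | cons z zs =>
      obtain ⟨zb, zn⟩ := z
      have hzt : zb = t' := by cases hp with | cons n h => rfl
      have hz : zb = xb := by
        have h4 : ¬ ((!xb) = zb) := (List.isChain_cons_cons.mp h2').1
        revert h4; cases xb <;> cases zb <;> decide
      subst hzt
      rw [hz] at hp ⊢
      exact Pairs.cons xn hp

lemma GFA.Chain.append {M : GFA T} {c c' c'' : List T × M.Q × List T}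
    {ls ls' : List (Bool × ℕ)} (h : M.Chain c ls c') (h' : M.Chain c' ls' c'') :
    M.Chain c (ls ++ ls') c'' := by
  induction h with
  | nil => exact h'
  | cons hs _ ih => exact .cons hs (ih h')

lemma GFA.step_inv {M : GFA T} {c c' : List T × M.Q × List T} {l : Bool × ℕ}
    (h : GFA.Step M c l c') :
    (∃ u v x q p, (x, q, p) ∈ M.ruleL ∧ c = (u ++ x, q, v) ∧ l = (true, x.length) ∧
      c' = (u, p, v)) ∨
    (∃ u v x q p, (q, x, p) ∈ M.ruleR ∧ c = (u, q, x ++ v) ∧ l = (false, x.length) ∧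
      c' = (u, p, v)) := by
  cases h with
  | left h => exact Or.inl ⟨_, _, _, _, _, h, rfl, rfl, rfl⟩
  | right h => exact Or.inr ⟨_, _, _, _, _, h, rfl, rfl, rfl⟩

-- ==================== the construction ====================

section Construction

variable (M : GFA T)

def Strs : Set (List T) := (fun r => r.1) '' M.ruleL ∪ (fun r => r.2.1) '' M.ruleR

def Infx : Set (List T) := {l | ∃ z ∈ Strs M, l <:+: z}

lemma finite_Infx : (Infx M).Finite := by
  have hs : (Strs M).Finite := (M.finL.image _).union (M.finR.image _)
  have he : Infx M = ⋃ z ∈ Strs M, {l | l <:+: z} := by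
    ext l; simp [Infx]
  rw [he]
  exact hs.biUnion fun z _ =>
    z.sublists.finite_toSet.subset fun l hl => List.mem_sublists.mpr hl.sublist

variable {M}

lemma infx_mono {l l' : List T} (h : l <:+: l') (h' : l' ∈ Infx M) : l ∈ Infx M := by
  obtain ⟨z, hz, hi⟩ := h'
  exact ⟨z, hz, h.trans hi⟩

lemma infx_of_ruleL {x : List T} {q p : M.Q} (h : (x, q, p) ∈ M.ruleL) : x ∈ Infx M :=
  ⟨x, Or.inl ⟨_, h, rfl⟩, List.infix_refl x⟩

lemma infx_of_ruleR {x : List T} {q p : M.Q} (h : (q, x, p) ∈ M.ruleR) : x ∈ Infx M :=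
  ⟨x, Or.inr ⟨_, h, rfl⟩, List.infix_refl x⟩

variable (M)

/-- States of the constructed automaton. -/
abbrev C : Type :=
  (M.Q × Bool) ⊕ ({l : List T // l ∈ Infx M} × {l : List T // l ∈ Infx M} × M.Q × Bool)

abbrev Q' : Type := Option (C M)

/-- "Aligned" state. -/
def stA (q : M.Q) (t : Bool) : Q' M := some (Sum.inl (q, t))

/-- "Mid-pair" state. -/
def stM (a b : List T) (ha : a ∈ Infx M) (hb : b ∈ Infx M) (q : M.Q) (t : Bool) : Q' M :=
  some (Sum.inr (⟨a, ha⟩, ⟨b, hb⟩, q, t))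

variable {M}

lemma stA_ne_none {q t} : stA M q t ≠ none := by simp [stA]
lemma stM_ne_none {a b ha hb q t} : stM M a b ha hb q t ≠ none := by simp [stM]
lemma stM_ne_stA {a b ha hb q t q' t'} : stM M a b ha hb q t ≠ stA M q' t' := by
  simp [stM, stA]

lemma stA_inj {q t q' t'} (h : stA M q t = stA M q' t') : q = q' ∧ t = t' := by
  simpa [stA] using h

lemma stM_inj {a b ha hb q t a' b' ha' hb' q' t'}
    (h : stM M a b ha hb q t = stM M a' b' ha' hb' q' t') :
    a = a' ∧ b = b' ∧ q = q' ∧ t = t' := by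
  simp only [stM, Option.some.injEq, Sum.inr.injEq, Prod.mk.injEq, Subtype.mk.injEq] at h
  tauto

variable (M)

/-- A pair of moves of `M` of type `t` from `q` to `p`, erasing `a` on the left and
`b` on the right. -/
def PairStep (t : Bool) (q : M.Q) (a b : List T) (p : M.Q) : Prop :=
  ∃ q₁, (t = true ∧ (a, q, q₁) ∈ M.ruleL ∧ (q₁, b, p) ∈ M.ruleR) ∨
        (t = false ∧ (q, b, q₁) ∈ M.ruleR ∧ (a, q₁, p) ∈ M.ruleL)

/-- ε-pair closure. -/
def E (t : Bool) : M.Q → M.Q → Prop :=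
  Relation.ReflTransGen (fun q p => PairStep M t q [] [] p)

/-- A nonempty pair, preceded by ε-pairs. -/
def P (t : Bool) (q : M.Q) (a b : List T) (p : M.Q) : Prop :=
  ∃ q', E M t q q' ∧ PairStep M t q' a b p ∧ a.length = b.length ∧ a ≠ []

def ruleL' : Set (List T × Q' M × Q' M) :=
  {r | (∃ q t a' c b p, ∃ (ha' : a' ∈ Infx M) (hb : b ∈ Infx M),
          P M t q (a' ++ [c]) b p ∧ r = ([c], stA M q t, stM M a' b ha' hb p t))
     ∨ (∃ a'' c b p t, ∃ (ha : a'' ++ [c] ∈ Infx M) (ha' : a'' ∈ Infx M) (hb : b ∈ Infx M),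
          a''.length + 1 = b.length ∧
          r = ([c], stM M (a'' ++ [c]) b ha hb p t, stM M a'' b ha' hb p t))
     ∨ (∃ x q t, (x, M.start, q) ∈ M.ruleL ∧ x.length ≤ 1 ∧ r = (x, none, stA M q t))
     ∨ (∃ x q t mid p s, ∃ (hp : p ∈ Infx M) (hs : s ∈ Infx M),
          (x, M.start, q) ∈ M.ruleL ∧ x = p ++ mid ++ s ∧ p ≠ [] ∧
          p.length = s.length ∧ mid.length ≤ 1 ∧
          r = (mid, none, stM M p s hp hs q t))}

def ruleR' : Set (Q' M × List T × Q' M) :=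
  {r | (∃ c p t, ∃ (hn : ([] : List T) ∈ Infx M) (hb : [c] ∈ Infx M),
          r = (stM M [] [c] hn hb p t, [c], stA M p t))
     ∨ (∃ a c brem p t, ∃ (ha : a ∈ Infx M) (hb : c :: brem ∈ Infx M) (hb' : brem ∈ Infx M),
          a ≠ [] ∧ a.length = brem.length ∧
          r = (stM M a (c :: brem) ha hb p t, [c], stM M a brem ha hb' p t))
     ∨ (∃ x q t, (M.start, x, q) ∈ M.ruleR ∧ x.length ≤ 1 ∧ r = (none, x, stA M q t))
     ∨ (∃ x q t mid p s, ∃ (hp : p ∈ Infx M) (hs : s ∈ Infx M),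
          (M.start, x, q) ∈ M.ruleR ∧ x = p ++ mid ++ s ∧ p ≠ [] ∧
          p.length = s.length ∧ mid.length ≤ 1 ∧
          r = (none, mid, stM M p s hp hs q t))}

def accept' : Set (Q' M) :=
  {g | ∃ q t f, f ∈ M.accept ∧ E M t q f ∧ g = stA M q t}

lemma P_infx {t : Bool} {q p : M.Q} {a b : List T} (h : P M t q a b p) :
    a ∈ Infx M ∧ b ∈ Infx M := by
  obtain ⟨q', -, ⟨q₁, h | h⟩, -, -⟩ := h
  · exact ⟨infx_of_ruleL h.2.1, infx_of_ruleR h.2.2⟩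
  · exact ⟨infx_of_ruleL h.2.2, infx_of_ruleR h.2.1⟩

instance : Finite (Q' M) := by
  haveI hq := M.finQ
  haveI hi : Finite {l : List T // l ∈ Infx M} := (finite_Infx M).to_subtype
  haveI : Finite (C M) := inferInstance
  exact Finite.of_equiv _ (Equiv.optionEquivSumPUnit.{0,0} (C M)).symm

lemma finite_ruleL' : (ruleL' M).Finite := by
  have : Finite (Q' M × Q' M) := inferInstance
  refine Set.Finite.subset (((finite_Infx M).insert []).prod Set.finite_univ) ?_
  rintro r (⟨q, t, a', c, b, p, ha', hb, hP, rfl⟩ |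
    ⟨a'', c, b, p, t, ha, ha', hb, hl, rfl⟩ |
    ⟨x, q, t, hx, hl, rfl⟩ | ⟨x, q, t, mid, p, s, hp, hs, hx, he, hne, hl, hm, rfl⟩) <;>
    refine ⟨?_, trivial⟩
  · exact Set.mem_insert_of_mem _ (infx_mono ⟨a', [], by simp⟩ (P_infx M hP).1)
  · exact Set.mem_insert_of_mem _ (infx_mono ⟨a'', [], by simp⟩ ha)
  · cases x with
    | nil => exact Set.mem_insert _ _
    | cons c cs => exact Set.mem_insert_of_mem _ (infx_of_ruleL hx)
  · exact Set.mem_insert_of_mem _ (infx_mono ⟨p, s, by simp [he]⟩ (infx_of_ruleL hx))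

lemma finite_ruleR' : (ruleR' M).Finite := by
  have : Finite (Q' M) := inferInstance
  refine Set.Finite.subset (Set.finite_univ.prod (((finite_Infx M).insert []).prod
    Set.finite_univ)) ?_
  rintro r (⟨c, p, t, hn, hb, rfl⟩ |
    ⟨a, c, brem, p, t, ha, hb, hb', hne, hl, rfl⟩ |
    ⟨x, q, t, hx, hl, rfl⟩ | ⟨x, q, t, mid, p, s, hp, hs, hx, he, hne, hl, hm, rfl⟩) <;>
    refine ⟨trivial, ?_, trivial⟩
  · exact Set.mem_insert_of_mem _ hb
  · exact Set.mem_insert_of_mem _ (infx_mono ⟨[], brem, by simp⟩ hb)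
  · cases x with
    | nil => exact Set.mem_insert _ _
    | cons c cs => exact Set.mem_insert_of_mem _ (infx_of_ruleR hx)
  · exact Set.mem_insert_of_mem _ (infx_mono ⟨p, s, by simp [he]⟩ (infx_of_ruleR hx))

/-- The constructed simple automaton. -/
abbrev M' : GFA T where
  Q := Q' M
  finQ := inferInstance
  start := none
  accept := accept' M
  ruleL := ruleL' M
  ruleR := ruleR' M
  finL := finite_ruleL' M
  finR := finite_ruleR' M

-- ==================== forward simulation ====================

/-- `M` has an accepting even computation of type `t` from `(u, q, v)`. -/
def Sim (M : GFA T) (u : List T) (q : M.Q) (v : List T) (t : Bool) : Prop :=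
  ∃ ls f, f ∈ M.accept ∧ M.Chain (u, q, v) ls ([], f, []) ∧ Pairs t ls

variable {M}

lemma pairStep_chain {t : Bool} {q p : M.Q} {a b u v : List T}
    (h : PairStep M t q a b p) (hl : a.length = b.length) :
    M.Chain (u ++ a, q, b ++ v) [(t, a.length), (!t, a.length)] (u, p, v) := by
  obtain ⟨q₁, ⟨rfl, h1, h2⟩ | ⟨rfl, h1, h2⟩⟩ := h
  · refine .cons (.left h1) (.cons ?_ (.nil _))
    have := GFA.Step.right (M := M) (u := u) (v := v) h2
    simpa [hl] using this
  · have s1 : M.Step (u ++ a, q, b ++ v) (false, a.length) (u ++ a, q₁, v) := by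
      have := GFA.Step.right (M := M) (u := u ++ a) (v := v) h1
      simpa [hl] using this
    exact .cons s1 (.cons (GFA.Step.left h2) (.nil _))

lemma Sim.of_E {u v : List T} {q q' : M.Q} {t : Bool} (hE : E M t q q')
    (h : Sim M u q' v t) : Sim M u q v t := by
  induction hE using Relation.ReflTransGen.head_induction_on with
  | refl => exact h
  | head hstep _ ih =>
    obtain ⟨ls, f, hf, hch, hp⟩ := ih
    refine ⟨(_, 0) :: (_, 0) :: ls, f, hf, ?_, Pairs.cons 0 hp⟩
    have := (pairStep_chain (u := u) (v := v) hstep rfl).append hch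
    simpa using this

lemma Sim.of_pair {u v a b : List T} {q p : M.Q} {t : Bool}
    (hps : PairStep M t q a b p) (hl : a.length = b.length)
    (h : Sim M u p v t) : Sim M (u ++ a) q (b ++ v) t := by
  obtain ⟨ls, f, hf, hch, hp⟩ := h
  exact ⟨_, f, hf, (pairStep_chain hps hl).append hch, Pairs.cons a.length hp⟩

lemma seg2 : ∀ (b' a' : List T) (ha : a' ∈ Infx M) (hb : b' ∈ Infx M)
    (hl : a'.length + 1 = b'.length) (p : M.Q) (t : Bool) (u v : List T),
    ∃ ls, (M' M).Chain (u ++ a', stM M a' b' ha hb p t, b' ++ v) ls (u, stA M p t, v)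
  | [], _, _, _, hl, _, _, _, _ => by simp at hl
  | c :: brem, a', ha, hb, hl, p, t, u, v => by
    rcases a'.eq_nil_or_concat with rfl | ⟨a'', c', hcc⟩
    on_goal 2 => rw [List.concat_eq_append] at hcc; subst hcc
    · have hbr : brem = [] := by simpa using hl
      subst hbr
      have hr : (stM M [] [c] ha hb p t, [c], stA M p t) ∈ ruleR' M :=
        Or.inl ⟨c, p, t, ha, hb, rfl⟩
      have step := GFA.Step.right (M := M' M) (u := u) (v := v) (x := [c]) hr
      rw [show u ++ ([] : List T) = u by simp]
      exact ⟨_, .cons step (.nil _)⟩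
    · have hlen : a''.length + 1 = brem.length := by simp at hl ⊢; omega
      have hb' : brem ∈ Infx M := infx_mono ⟨[c], [], by simp⟩ hb
      have ha'' : a'' ∈ Infx M := infx_mono ⟨[], [c'], by simp⟩ ha
      have hr1 : (stM M (a'' ++ [c']) (c :: brem) ha hb p t, [c],
          stM M (a'' ++ [c']) brem ha hb' p t) ∈ ruleR' M :=
        Or.inr (Or.inl ⟨a'' ++ [c'], c, brem, p, t, ha, hb, hb', by simp,
          by simp; omega, rfl⟩)
      have hr2 : ([c'], stM M (a'' ++ [c']) brem ha hb' p t,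
          stM M a'' brem ha'' hb' p t) ∈ ruleL' M :=
        Or.inr (Or.inl ⟨a'', c', brem, p, t, ha, ha'', hb', hlen, rfl⟩)
      obtain ⟨ls, hch⟩ := seg2 brem a'' ha'' hb' hlen p t u v
      have c2 := GFA.Chain.cons (GFA.Step.left (M := M' M) (u := u ++ a'')
        (v := brem ++ v) hr2) hch
      rw [List.append_assoc] at c2
      have c3 := GFA.Chain.cons (GFA.Step.right (M := M' M) (u := u ++ (a'' ++ [c']))
        (v := brem ++ v) (x := [c]) hr1) c2
      exact ⟨_, c3⟩

lemma segL (a' b' : List T) (ha : a' ∈ Infx M) (hb : b' ∈ Infx M)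
    (hl : a'.length = b'.length) (hne : a' ≠ []) (p : M.Q) (t : Bool) (u v : List T) :
    ∃ ls, (M' M).Chain (u ++ a', stM M a' b' ha hb p t, b' ++ v) ls (u, stA M p t, v) := by
  rcases a'.eq_nil_or_concat with rfl | ⟨a'', c', hcc⟩
  on_goal 2 => rw [List.concat_eq_append] at hcc; subst hcc
  · exact absurd rfl hne
  · have ha'' : a'' ∈ Infx M := infx_mono ⟨[], [c'], by simp⟩ ha
    have hlen : a''.length + 1 = b'.length := by simp at hl ⊢; omega
    have hr2 : ([c'], stM M (a'' ++ [c']) b' ha hb p t,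
        stM M a'' b' ha'' hb p t) ∈ ruleL' M :=
      Or.inr (Or.inl ⟨a'', c', b', p, t, ha, ha'', hb, hlen, rfl⟩)
    obtain ⟨ls, hch⟩ := seg2 b' a'' ha'' hb hlen p t u v
    have c2 := GFA.Chain.cons (GFA.Step.left (M := M' M) (u := u ++ a'')
      (v := b' ++ v) hr2) hch
    rw [List.append_assoc] at c2
    exact ⟨_, c2⟩

/-- Simulation of one nonempty pair. -/
lemma fwd_pair {t : Bool} {q q₂ : M.Q} {a b u₁ v₂ : List T} (hP : P M t q a b q₂) :
    ∃ ls, (M' M).Chain (u₁ ++ a, stA M q t, b ++ v₂) ls (u₁, stA M q₂ t, v₂) := by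
  have hlen : a.length = b.length := hP.choose_spec.2.2.1
  have hne : a ≠ [] := hP.choose_spec.2.2.2
  have haI : a ∈ Infx M := (P_infx M hP).1
  have hbI : b ∈ Infx M := (P_infx M hP).2
  rcases a.eq_nil_or_concat with rfl | ⟨a'', c, hcc⟩
  · exact absurd rfl hne
  rw [List.concat_eq_append] at hcc; subst hcc
  have ha'' : a'' ∈ Infx M := infx_mono ⟨[], [c], by simp⟩ haI
  have hr : ([c], stA M q t, stM M a'' b ha'' hbI q₂ t) ∈ ruleL' M :=
    Or.inl ⟨q, t, a'', c, b, q₂, ha'', hbI, hP, rfl⟩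
  obtain ⟨ls, hch⟩ := seg2 b a'' ha'' hbI (by simp at hlen ⊢; omega) q₂ t u₁ v₂
  have c2 := GFA.Chain.cons (GFA.Step.left (M := M' M) (u := u₁ ++ a'')
    (v := b ++ v₂) hr) hch
  rw [List.append_assoc] at c2
  exact ⟨_, c2⟩

/-- Forward simulation of an even computation. -/
lemma fwd {t : Bool} {ls : List (Bool × ℕ)} (hp : Pairs t ls) :
    ∀ {u v : List T} {q q₀ f : M.Q}, E M t q q₀ → f ∈ M.accept →
      M.Chain (u, q₀, v) ls ([], f, []) →
      ∃ g ls', g ∈ accept' M ∧ (M' M).Chain (u, stA M q t, v) ls' ([], g, []) := by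
  induction hp with
  | nil =>
    intro u v q q₀ f hE hf hch
    cases hch
    exact ⟨stA M q t, [], ⟨q, t, _, hf, hE, rfl⟩, .nil _⟩
  | @cons n ls hp ih =>
    intro u v q q₀ f hE hf hch
    obtain ⟨c₁, s1, hch1⟩ : ∃ c₁, (M.Step (u, q₀, v) (t, n) c₁) ∧
        M.Chain c₁ ((!t, n) :: ls) ([], f, []) := by
      cases hch with | cons h h' => exact ⟨_, h, h'⟩
    obtain ⟨c₂, s2, hch2⟩ : ∃ c₂, (M.Step c₁ (!t, n) c₂) ∧ M.Chain c₂ ls ([], f, []) := by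
      cases hch1 with | cons h h' => exact ⟨_, h, h'⟩
    -- extract the pair data
    obtain ⟨a, b, u₁, v₁, q₂, hps, hla, hlb, rfl, rfl, rfl⟩ :
        ∃ a b u₁ v₁ q₂, PairStep M t q₀ a b q₂ ∧ a.length = n ∧ b.length = n ∧
          u = u₁ ++ a ∧ v = b ++ v₁ ∧ c₂ = (u₁, q₂, v₁) := by
      cases t
      · -- t = false : right then left
        rcases GFA.step_inv s1 with ⟨u', v', x, qq, pp, hr, hc, hlbl, hc'⟩ |
          ⟨u', v', x, qq, pp, hr, hc, hlbl, hc'⟩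
        · exfalso; simp at hlbl
        injection hc with h1 h2; injection h2 with h3 h4
        subst h1; subst h3; subst h4; subst hc'
        injection hlbl with hb1 hb2
        rcases GFA.step_inv s2 with ⟨u'', v'', x₂, qq₂, pp₂, hr₂, hc₂, hlbl₂, hc₂'⟩ |
          ⟨u'', v'', x₂, qq₂, pp₂, hr₂, hc₂, hlbl₂, hc₂'⟩
        on_goal 2 => exfalso; simp at hlbl₂
        injection hc₂ with h5 h6; injection h6 with h7 h8
        subst h5; subst h7; subst h8
        injection hlbl₂ with hb3 hb4
        exact ⟨x₂, x, u'', v', pp₂, ⟨pp, Or.inr ⟨rfl, hr, hr₂⟩⟩, hb4.symm, hb2.symm,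
          rfl, rfl, hc₂'⟩
      · -- t = true : left then right
        rcases GFA.step_inv s1 with ⟨u', v', x, qq, pp, hr, hc, hlbl, hc'⟩ |
          ⟨u', v', x, qq, pp, hr, hc, hlbl, hc'⟩
        on_goal 2 => exfalso; simp at hlbl
        injection hc with h1 h2; injection h2 with h3 h4
        subst h1; subst h3; subst h4; subst hc'
        injection hlbl with hb1 hb2
        rcases GFA.step_inv s2 with ⟨u'', v'', x₂, qq₂, pp₂, hr₂, hc₂, hlbl₂, hc₂'⟩ |
          ⟨u'', v'', x₂, qq₂, pp₂, hr₂, hc₂, hlbl₂, hc₂'⟩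
        · exfalso; simp at hlbl₂
        injection hc₂ with h5 h6; injection h6 with h7 h8
        subst h5; subst h7; subst h8
        injection hlbl₂ with hb3 hb4
        exact ⟨x, x₂, u', v'', pp₂, ⟨pp, Or.inl ⟨rfl, hr, hr₂⟩⟩, hb2.symm, hb4.symm,
          rfl, rfl, hc₂'⟩
    rcases eq_or_ne a [] with rfl | hne
    · -- empty pair : extend the ε-closure
      have hb0 : b = [] := by
        have : b.length = 0 := by simp at hla; omega
        simpa using this
      subst hb0
      have hE' : E M t q q₂ := hE.tail hps
      obtain ⟨g, ls', hg, hch'⟩ := ih hE' hf hch2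
      exact ⟨g, ls', hg, by simpa using hch'⟩
    · -- nonempty pair
      have hP : P M t q a b q₂ := ⟨q₀, hE, hps, by omega, hne⟩
      obtain ⟨g, ls', hg, hch'⟩ := ih (Relation.ReflTransGen.refl) hf hch2
      obtain ⟨lsp, hchp⟩ := fwd_pair (u₁ := u₁) (v₂ := v₁) hP
      exact ⟨g, _, hg, hchp.append hch'⟩

-- ==================== backward simulation ====================

lemma back {ls : List (Bool × ℕ)} {c d : List T × (M' M).Q × List T}
    (hch : (M' M).Chain c ls d) :
    ∀ g : Q' M, d = ([], g, []) → g ∈ accept' M →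
    (∀ q t u v, c = (u, stA M q t, v) → Sim M u q v t) ∧
    (∀ a b ha hb q t u v, c = (u, stM M a b ha hb q t, v) →
      ∃ u₁ v₁, u = u₁ ++ a ∧ v = b ++ v₁ ∧ Sim M u₁ q v₁ t) := by
  induction hch with
  | nil c =>
    rintro g rfl hg
    obtain ⟨q', t', f, hf, hE, rfl⟩ := hg
    constructor
    · rintro q t u v heq
      simp only [Prod.mk.injEq] at heq
      obtain ⟨h1, h2, h3⟩ := heq
      subst h1; subst h3
      obtain ⟨rfl, rfl⟩ := stA_inj h2
      exact Sim.of_E hE ⟨[], f, hf, .nil _, .nil⟩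
    · rintro a b ha hb q t u v heq
      simp only [Prod.mk.injEq] at heq
      exact absurd heq.2.1.symm stM_ne_stA
  | @cons c c' c'' l ls h h' ih =>
    rintro g rfl hg
    specialize ih g rfl hg
    constructor
    · rintro q t u v rfl
      rcases GFA.step_inv h with ⟨u', v', xs, qq, pp, hr, hc, hlbl, hc'⟩ |
        ⟨u', v', xs, qq, pp, hr, hc, hlbl, hc'⟩
      · -- left move from an A-state : must be L1
        simp only [Prod.mk.injEq] at hc
        obtain ⟨h1, h2, h3⟩ := hc
        subst h1; subst h3
        rcases hr with ⟨q₁, t₁, a', cc, b, p, ha', hb, hP, heq⟩ |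
          ⟨a'', cc, b, p, t₁, hA, hA', hB, hlen2, heq⟩ |
          ⟨x, q₁, t₁, hx, hxl, heq⟩ | ⟨x, q₁, t₁, mid, p, s, hp, hs, hx, hxe, hpne, hpl, hml, heq⟩
        · simp only [Prod.mk.injEq] at heq
          obtain ⟨hxs, hst, hpp⟩ := heq
          subst hxs; subst hpp
          rw [← h2] at hst
          obtain ⟨rfl, rfl⟩ := stA_inj hst.symm
          subst hc'
          obtain ⟨u₁, v₁, hu, hv, hsim⟩ := ih.2 a' b ha' hb p t₁ u' v rfl
          obtain ⟨qmid, hE, hps, hlen, hne⟩ := hP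
          have hres := Sim.of_E hE (Sim.of_pair hps hlen hsim)
          have hueq : u' ++ [cc] = u₁ ++ (a' ++ [cc]) := by
            rw [hu, List.append_assoc]
          rw [hueq, hv]
          exact hres
        · exfalso
          simp only [Prod.mk.injEq] at heq
          rw [← h2] at heq
          exact stM_ne_stA heq.2.1.symm
        · exfalso
          simp only [Prod.mk.injEq] at heq
          rw [← h2] at heq
          exact stA_ne_none heq.2.1
        · exfalso
          simp only [Prod.mk.injEq] at heq
          rw [← h2] at heq
          exact stA_ne_none heq.2.1
      · -- right move from an A-state : impossible
        exfalso
        simp only [Prod.mk.injEq] at hc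
        obtain ⟨h1, h2, h3⟩ := hc
        rcases hr with ⟨cc, p, t₁, hn, hb', heq⟩ |
          ⟨a₂, cc, brem, p, t₁, hA, hB, hB', hane, hlen2, heq⟩ |
          ⟨x, q₁, t₁, hx, hxl, heq⟩ | ⟨x, q₁, t₁, mid, p, s, hp, hs, hx, hxe, hpne, hpl, hml, heq⟩ <;>
          simp only [Prod.mk.injEq] at heq
        · rw [← h2] at heq; exact stM_ne_stA heq.1.symm
        · rw [← h2] at heq; exact stM_ne_stA heq.1.symm
        · rw [← h2] at heq; exact stA_ne_none heq.1
        · rw [← h2] at heq; exact stA_ne_none heq.1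
    · rintro a b ha hb q t u v rfl
      rcases GFA.step_inv h with ⟨u', v', xs, qq, pp, hr, hc, hlbl, hc'⟩ |
        ⟨u', v', xs, qq, pp, hr, hc, hlbl, hc'⟩
      · -- left move from a Mid-state : must be L2
        simp only [Prod.mk.injEq] at hc
        obtain ⟨h1, h2, h3⟩ := hc
        subst h1; subst h3
        rcases hr with ⟨q₁, t₁, a', cc, b₂, p, ha', hb₂, hP, heq⟩ |
          ⟨a'', cc, b₂, p, t₁, hA, hA', hB, hlen2, heq⟩ |
          ⟨x, q₁, t₁, hx, hxl, heq⟩ | ⟨x, q₁, t₁, mid, p, s, hp, hs, hx, hxe, hpne, hpl, hml, heq⟩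
        on_goal 1 => exfalso; simp only [Prod.mk.injEq] at heq; rw [← h2] at heq
                     exact stM_ne_stA heq.2.1
        on_goal 2 => exfalso; simp only [Prod.mk.injEq] at heq; rw [← h2] at heq
                     exact stM_ne_none heq.2.1
        on_goal 2 => exfalso; simp only [Prod.mk.injEq] at heq; rw [← h2] at heq
                     exact stM_ne_none heq.2.1
        simp only [Prod.mk.injEq] at heq
        obtain ⟨hxs, hst, hpp⟩ := heq
        subst hxs; subst hpp
        rw [← h2] at hst
        obtain ⟨haeq, hbeq, hqeq, hteq⟩ := stM_inj hst
        subst hbeq; subst hqeq; subst hteq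
        subst hc'
        obtain ⟨u₁, v₁, hu, hv, hsim⟩ := ih.2 a'' b hA' hB q t u' v rfl
        refine ⟨u₁, v₁, ?_, hv, hsim⟩
        rw [haeq, hu, List.append_assoc]
      · -- right move from a Mid-state : Ra or Rb
        simp only [Prod.mk.injEq] at hc
        obtain ⟨h1, h2, h3⟩ := hc
        subst h1; subst h3
        rcases hr with ⟨cc, p, t₁, hn, hb', heq⟩ |
          ⟨a₂, cc, brem, p, t₁, hA, hB, hB', hane, hlen2, heq⟩ |
          ⟨x, q₁, t₁, hx, hxl, heq⟩ | ⟨x, q₁, t₁, mid, p, s, hp, hs, hx, hxe, hpne, hpl, hml, heq⟩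
        · -- Ra
          simp only [Prod.mk.injEq] at heq
          obtain ⟨hst, hxs, hpp⟩ := heq
          subst hxs; subst hpp
          rw [← h2] at hst
          obtain ⟨haeq, hbeq, hqeq, hteq⟩ := stM_inj hst
          subst haeq; subst hbeq; subst hqeq; subst hteq
          subst hc'
          have hsim := ih.1 q t u v' rfl
          exact ⟨u, v', by simp, rfl, hsim⟩
        · -- Rb
          simp only [Prod.mk.injEq] at heq
          obtain ⟨hst, hxs, hpp⟩ := heq
          subst hxs; subst hpp
          rw [← h2] at hst
          obtain ⟨haeq, hbeq, hqeq, hteq⟩ := stM_inj hst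
          subst haeq; subst hbeq; subst hqeq; subst hteq
          subst hc'
          obtain ⟨u₁, v₁, hu, hv, hsim⟩ := ih.2 a brem hA hB' q t u v' rfl
          exact ⟨u₁, v₁, hu, by simp [hv], hsim⟩
        · exfalso; simp only [Prod.mk.injEq] at heq; rw [← h2] at heq
          exact stM_ne_none heq.1
        · exfalso; simp only [Prod.mk.injEq] at heq; rw [← h2] at heq
          exact stM_ne_none heq.1

-- ==================== trace shape ====================

lemma trace {ls : List (Bool × ℕ)} {c d : List T × (M' M).Q × List T}
    (hch : (M' M).Chain c ls d) :
    ∀ g : Q' M, d = ([], g, []) → g ∈ accept' M →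
    (∀ q t u v, c = (u, stA M q t, v) → Pairs true ls) ∧
    (∀ a b ha hb q t u v, c = (u, stM M a b ha hb q t, v) →
      (a.length = b.length → Pairs true ls) ∧
      (a.length + 1 = b.length → ∃ ls₂, ls = (false, 1) :: ls₂ ∧ Pairs true ls₂)) := by
  induction hch with
  | nil c =>
    rintro g rfl hg
    obtain ⟨q', t', f, hf, hE, rfl⟩ := hg
    constructor
    · rintro q t u v heq
      exact .nil
    · rintro a b ha hb q t u v heq
      simp only [Prod.mk.injEq] at heq
      exact absurd heq.2.1.symm stM_ne_stA
  | @cons c c' c'' l ls h h' ih =>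
    rintro g rfl hg
    specialize ih g rfl hg
    constructor
    · rintro q t u v rfl
      rcases GFA.step_inv h with ⟨u', v', xs, qq, pp, hr, hc, hlbl, hc'⟩ |
        ⟨u', v', xs, qq, pp, hr, hc, hlbl, hc'⟩
      · simp only [Prod.mk.injEq] at hc
        obtain ⟨h1, h2, h3⟩ := hc
        subst h3
        rcases hr with ⟨q₁, t₁, a', cc, b, p, ha', hb, hP, heq⟩ |
          ⟨a'', cc, b, p, t₁, hA, hA', hB, hlen2, heq⟩ |
          ⟨x, q₁, t₁, hx, hxl, heq⟩ | ⟨x, q₁, t₁, mid, p, s, hp, hs, hx, hxe, hpne, hpl, hml, heq⟩ <;>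
          simp only [Prod.mk.injEq] at heq
        on_goal 2 => exact absurd (h2 ▸ heq.2.1).symm stM_ne_stA
        on_goal 2 => exact absurd (h2 ▸ heq.2.1) stA_ne_none
        on_goal 2 => exact absurd (h2 ▸ heq.2.1) stA_ne_none
        obtain ⟨hxs, hst, hpp⟩ := heq
        subst hxs; subst hpp; subst hc'; subst hlbl
        obtain ⟨qmid, hE, hps, hlen, hne⟩ := hP
        have hl2 : a'.length + 1 = b.length := by simp at hlen; omega
        obtain ⟨ls₂, rfl, hp₂⟩ := (ih.2 a' b ha' hb p t₁ u' v rfl).2 hl2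
        exact Pairs.cons 1 hp₂
      · exfalso
        simp only [Prod.mk.injEq] at hc
        obtain ⟨h1, h2, h3⟩ := hc
        rcases hr with ⟨cc, p, t₁, hn, hb', heq⟩ |
          ⟨a₂, cc, brem, p, t₁, hA, hB, hB', hane, hlen2, heq⟩ |
          ⟨x, q₁, t₁, hx, hxl, heq⟩ | ⟨x, q₁, t₁, mid, p, s, hp, hs, hx, hxe, hpne, hpl, hml, heq⟩ <;>
          simp only [Prod.mk.injEq] at heq
        · exact absurd (h2 ▸ heq.1).symm stM_ne_stA
        · exact absurd (h2 ▸ heq.1).symm stM_ne_stA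
        · exact absurd (h2 ▸ heq.1) stA_ne_none
        · exact absurd (h2 ▸ heq.1) stA_ne_none
    · rintro a b ha hb q t u v rfl
      rcases GFA.step_inv h with ⟨u', v', xs, qq, pp, hr, hc, hlbl, hc'⟩ |
        ⟨u', v', xs, qq, pp, hr, hc, hlbl, hc'⟩
      · simp only [Prod.mk.injEq] at hc
        obtain ⟨h1, h2, h3⟩ := hc
        subst h3
        rcases hr with ⟨q₁, t₁, a', cc, b₂, p, ha', hb₂, hP, heq⟩ |
          ⟨a'', cc, b₂, p, t₁, hA, hA', hB, hlen2, heq⟩ |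
          ⟨x, q₁, t₁, hx, hxl, heq⟩ | ⟨x, q₁, t₁, mid, p, s, hp, hs, hx, hxe, hpne, hpl, hml, heq⟩ <;>
          simp only [Prod.mk.injEq] at heq
        on_goal 1 => exact absurd (h2 ▸ heq.2.1) stM_ne_stA
        on_goal 2 => exact absurd (h2 ▸ heq.2.1) stM_ne_none
        on_goal 2 => exact absurd (h2 ▸ heq.2.1) stM_ne_none
        obtain ⟨hxs, hst, hpp⟩ := heq
        subst hxs; subst hpp; subst hc'; subst hlbl
        rw [← h2] at hst
        obtain ⟨haeq, hbeq, hqeq, hteq⟩ := stM_inj hst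
        subst hbeq; subst hqeq; subst hteq
        constructor
        · intro hlab
          obtain ⟨ls₂, rfl, hp₂⟩ := (ih.2 a'' b hA' hB q t u' v rfl).2 (by omega)
          exact Pairs.cons 1 hp₂
        · intro hlab
          exfalso
          rw [haeq] at hlab
          simp at hlab
          omega
      · simp only [Prod.mk.injEq] at hc
        obtain ⟨h1, h2, h3⟩ := hc
        subst h1; subst h3
        rcases hr with ⟨cc, p, t₁, hn, hb', heq⟩ |
          ⟨a₂, cc, brem, p, t₁, hA, hB, hB', hane, hlen2, heq⟩ |
          ⟨x, q₁, t₁, hx, hxl, heq⟩ | ⟨x, q₁, t₁, mid, p, s, hp, hs, hx, hxe, hpne, hpl, hml, heq⟩ <;>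
          simp only [Prod.mk.injEq] at heq
        on_goal 3 => rw [← h2] at heq; exact absurd heq.1 stM_ne_none
        on_goal 3 => rw [← h2] at heq; exact absurd heq.1 stM_ne_none
        · -- Ra
          obtain ⟨hst, hxs, hpp⟩ := heq
          subst hxs; subst hpp; subst hc'; subst hlbl
          rw [← h2] at hst
          obtain ⟨haeq, hbeq, hqeq, hteq⟩ := stM_inj hst
          subst haeq; subst hbeq; subst hqeq; subst hteq
          constructor
          · intro hlab; simp at hlab
          · intro hlab
            exact ⟨ls, rfl, ih.1 q t u v' rfl⟩
        · -- Rb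
          obtain ⟨hst, hxs, hpp⟩ := heq
          subst hxs; subst hpp; subst hc'; subst hlbl
          rw [← h2] at hst
          obtain ⟨haeq, hbeq, hqeq, hteq⟩ := stM_inj hst
          subst haeq; subst hbeq; subst hqeq; subst hteq
          constructor
          · intro hlab; exfalso; simp at hlab; omega
          · intro hlab
            exact ⟨ls, rfl, (ih.2 a brem hA hB' q t u v' rfl).1 hlen2⟩

variable (M)

-- ==================== top level ====================

variable {M}

lemma chain_initEven {x y : List T} {ls : List (Bool × ℕ)} {g : Q' M}
    (hch : (M' M).Chain (x, none, y) ls ([], g, [])) (hg : g ∈ accept' M) :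
    InitEvenTrace ls := by
  cases hch with
  | nil =>
    obtain ⟨q', t', f, hf, hE, heq⟩ := hg
    exact absurd heq.symm stA_ne_none
  | @cons _ c' _ l ls' h h' =>
    rcases GFA.step_inv h with ⟨u', v', xs, qq, pp, hr, hc, hlbl, hc'⟩ |
      ⟨u', v', xs, qq, pp, hr, hc, hlbl, hc'⟩
    · simp only [Prod.mk.injEq] at hc
      obtain ⟨h1, h2, h3⟩ := hc
      subst h2
      rcases hr with ⟨q₁, t₁, a', cc, b, p, ha', hb, hP, heq⟩ |
        ⟨a'', cc, b, p, t₁, hA, hA', hB, hlen2, heq⟩ |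
        ⟨x₀, q₀, t, hx, hxl, heq⟩ | ⟨x₀, q₀, t, mid, p, s, hpI, hsI, hx, hxe, hpne, hpl, hml, heq⟩ <;>
        simp only [Prod.mk.injEq] at heq
      · exact absurd heq.2.1.symm stA_ne_none
      · exact absurd heq.2.1.symm stM_ne_none
      · obtain ⟨hxs, -, hpp⟩ := heq
        subst hpp; subst hc'
        exact ⟨l, ls', rfl, ((trace h' g rfl hg).1 q₀ t u' v' rfl).evenTrace⟩
      · obtain ⟨hxs, -, hpp⟩ := heq
        subst hpp; subst hc'
        exact ⟨l, ls', rfl,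
          (((trace h' g rfl hg).2 p s hpI hsI q₀ t u' v' rfl).1 hpl).evenTrace⟩
    · simp only [Prod.mk.injEq] at hc
      obtain ⟨h1, h2, h3⟩ := hc
      subst h2
      rcases hr with ⟨cc, p, t₁, hn, hb', heq⟩ |
        ⟨a₂, cc, brem, p, t₁, hA, hB, hB', hane, hlen2, heq⟩ |
        ⟨x₀, q₀, t, hx, hxl, heq⟩ | ⟨x₀, q₀, t, mid, p, s, hpI, hsI, hx, hxe, hpne, hpl, hml, heq⟩ <;>
        simp only [Prod.mk.injEq] at heq
      · exact absurd heq.1.symm stM_ne_none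
      · exact absurd heq.1.symm stM_ne_none
      · obtain ⟨-, hxs, hpp⟩ := heq
        subst hpp; subst hc'
        exact ⟨l, ls', rfl, ((trace h' g rfl hg).1 q₀ t u' v' rfl).evenTrace⟩
      · obtain ⟨-, hxs, hpp⟩ := heq
        subst hpp; subst hc'
        exact ⟨l, ls', rfl,
          (((trace h' g rfl hg).2 p s hpI hsI q₀ t u' v' rfl).1 hpl).evenTrace⟩

lemma langM'_eq_init : (M' M).lang = (M' M).langInitEven := by
  ext w
  constructor
  · rintro ⟨x, y, ls, g, rfl, hg, hch⟩
    exact ⟨x, y, ls, g, rfl, hg, chain_initEven hch hg, hch⟩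
  · rintro ⟨x, y, ls, g, rfl, hg, -, hch⟩
    exact ⟨x, y, ls, g, rfl, hg, hch⟩

lemma first_decomp (x₀ : List T) (hI : x₀ ∈ Infx M) :
    ∃ p mid s, ∃ (_ : p ∈ Infx M) (_ : s ∈ Infx M),
      x₀ = p ++ mid ++ s ∧ p.length = s.length ∧ mid.length ≤ 1 ∧
      (p = [] → x₀ = mid) := by
  set j := x₀.length / 2 with hj
  set m := x₀.length % 2 with hm
  refine ⟨x₀.take j, (x₀.drop j).take m, (x₀.drop j).drop m,
    infx_mono (x₀.take_prefix j).isInfix hI,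
    infx_mono (((x₀.drop j).drop_suffix m).trans (x₀.drop_suffix j)).isInfix hI,
    ?_, ?_, ?_, ?_⟩
  · rw [List.append_assoc, List.take_append_drop, List.take_append_drop]
  · simp only [List.length_take, List.length_drop]
    omega
  · simp only [List.length_take, List.length_drop]
    omega
  · intro hp0
    have hx0 : x₀.length ≤ 1 := by
      have := congrArg List.length hp0
      simp only [List.length_take, List.length_nil] at this
      omega
    have hjj : j = 0 := by omega
    rw [hjj]
    simp only [List.drop_zero, List.take_zero, List.nil_append]
    rw [List.take_of_length_le (by omega)]

lemma langM'_eq : (M' M).lang = M.langInitEven := by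
  ext w
  constructor
  · rintro ⟨x, y, ls, g, rfl, hg, hch⟩
    cases hch with
    | nil =>
      obtain ⟨q', t', f, hf, hE, heq⟩ := hg
      exact absurd heq.symm stA_ne_none
    | @cons _ c' _ l ls' h h' =>
      rcases GFA.step_inv h with ⟨u', v', xs, qq, pp, hr, hc, hlbl, hc'⟩ |
        ⟨u', v', xs, qq, pp, hr, hc, hlbl, hc'⟩
      · simp only [Prod.mk.injEq] at hc
        obtain ⟨h1, h2, h3⟩ := hc
        subst h1; subst h3; subst h2
        rcases hr with ⟨q₁, t₁, a', cc, b, p, ha', hb, hP, heq⟩ |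
          ⟨a'', cc, b, p, t₁, hA, hA', hB, hlen2, heq⟩ |
          ⟨x₀, q₀, t, hx, hxl, heq⟩ | ⟨x₀, q₀, t, mid, p, s, hpI, hsI, hx, hxe, hpne, hpl, hml, heq⟩ <;>
          simp only [Prod.mk.injEq] at heq
        · exact absurd heq.2.1.symm stA_ne_none
        · exact absurd heq.2.1.symm stM_ne_none
        · obtain ⟨hxs, -, hpp⟩ := heq
          subst hxs; subst hpp; subst hc'
          obtain ⟨lsM, f, hf, hchM, hp⟩ := (back h' g rfl hg).1 q₀ t u' y rfl
          exact ⟨u' ++ xs, y, (true, xs.length) :: lsM, f, rfl, hf,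
            ⟨_, _, rfl, hp.evenTrace⟩, .cons (GFA.Step.left hx) hchM⟩
        · obtain ⟨hxs, -, hpp⟩ := heq
          subst hxs; subst hpp; subst hc'
          obtain ⟨u₁, v₁, hu, hv, lsM, f, hf, hchM, hp⟩ :=
            (back h' g rfl hg).2 p s hpI hsI q₀ t u' y rfl
          refine ⟨u₁ ++ x₀, v₁, (true, x₀.length) :: lsM, f, ?_, hf,
            ⟨_, _, rfl, hp.evenTrace⟩, .cons (GFA.Step.left hx) hchM⟩
          rw [hu, hv, hxe]
          simp [List.append_assoc]
      · simp only [Prod.mk.injEq] at hc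
        obtain ⟨h1, h2, h3⟩ := hc
        subst h1; subst h3; subst h2
        rcases hr with ⟨cc, p, t₁, hn, hb', heq⟩ |
          ⟨a₂, cc, brem, p, t₁, hA, hB, hB', hane, hlen2, heq⟩ |
          ⟨x₀, q₀, t, hx, hxl, heq⟩ | ⟨x₀, q₀, t, mid, p, s, hpI, hsI, hx, hxe, hpne, hpl, hml, heq⟩ <;>
          simp only [Prod.mk.injEq] at heq
        · exact absurd heq.1.symm stM_ne_none
        · exact absurd heq.1.symm stM_ne_none
        · obtain ⟨-, hxs, hpp⟩ := heq
          subst hxs; subst hpp; subst hc'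
          obtain ⟨lsM, f, hf, hchM, hp⟩ := (back h' g rfl hg).1 q₀ t x v' rfl
          exact ⟨x, xs ++ v', (false, xs.length) :: lsM, f, rfl, hf,
            ⟨_, _, rfl, hp.evenTrace⟩, .cons (GFA.Step.right hx) hchM⟩
        · obtain ⟨-, hxs, hpp⟩ := heq
          subst hxs; subst hpp; subst hc'
          obtain ⟨u₁, v₁, hu, hv, lsM, f, hf, hchM, hp⟩ :=
            (back h' g rfl hg).2 p s hpI hsI q₀ t x v' rfl
          refine ⟨u₁, x₀ ++ v₁, (false, x₀.length) :: lsM, f, ?_, hf,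
            ⟨_, _, rfl, hp.evenTrace⟩, .cons (GFA.Step.right hx) hchM⟩
          rw [hu, hv, hxe]
          simp [List.append_assoc]
  · rintro ⟨x, y, ls, f, rfl, hf, ⟨l₀, ls', rfl, hev⟩, hch⟩
    obtain ⟨t, hp⟩ := evenTrace_pairs ls' hev
    obtain ⟨c₁, s1, hch1⟩ : ∃ c₁, M.Step (x, M.start, y) l₀ c₁ ∧
        M.Chain c₁ ls' ([], f, []) := by
      cases hch with | cons h h' => exact ⟨_, h, h'⟩
    rcases GFA.step_inv s1 with ⟨x₁, v', x₀, qq, q₀, hx, hc, hlbl, hc'⟩ |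
      ⟨u', y₁, x₀, qq, q₀, hx, hc, hlbl, hc'⟩
    · -- first move reads on the left
      simp only [Prod.mk.injEq] at hc
      obtain ⟨h1, h2, h3⟩ := hc
      subst h1; subst h3; subst h2; subst hc'
      obtain ⟨pd, mid, sd, hpI, hsI, hxe, hpl, hml, hctr⟩ :=
        first_decomp x₀ (infx_of_ruleL hx)
      obtain ⟨g, ls'', hg, hch'⟩ := fwd hp Relation.ReflTransGen.refl hf hch1
      rcases eq_or_ne pd [] with hp0 | hpne
      · have hxm : x₀ = mid := hctr hp0
        have hrule : (x₀, none, stA M q₀ t) ∈ ruleL' M :=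
          Or.inr (Or.inr (Or.inl ⟨x₀, q₀, t, hx, by rw [hxm]; exact hml, rfl⟩))
        exact ⟨x₁ ++ x₀, y, _, g, rfl, hg, .cons (GFA.Step.left hrule) hch'⟩
      · have hrule : (mid, none, stM M pd sd hpI hsI q₀ t) ∈ ruleL' M :=
          Or.inr (Or.inr (Or.inr ⟨x₀, q₀, t, mid, pd, sd, hpI, hsI, hx, hxe, hpne,
            hpl, hml, rfl⟩))
        obtain ⟨lsg, hseg⟩ := segL pd sd hpI hsI hpl hpne q₀ t x₁ y
        refine ⟨(x₁ ++ pd) ++ mid, sd ++ y, _, g, ?_, hg,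
          .cons (GFA.Step.left hrule) (hseg.append hch')⟩
        rw [hxe]
        simp [List.append_assoc]
    · -- first move reads on the right
      simp only [Prod.mk.injEq] at hc
      obtain ⟨h1, h2, h3⟩ := hc
      subst h1; subst h3; subst h2; subst hc'
      obtain ⟨pd, mid, sd, hpI, hsI, hxe, hpl, hml, hctr⟩ :=
        first_decomp x₀ (infx_of_ruleR hx)
      obtain ⟨g, ls'', hg, hch'⟩ := fwd hp Relation.ReflTransGen.refl hf hch1
      rcases eq_or_ne pd [] with hp0 | hpne
      · have hxm : x₀ = mid := hctr hp0
        have hrule : (none, x₀, stA M q₀ t) ∈ ruleR' M :=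
          Or.inr (Or.inr (Or.inl ⟨x₀, q₀, t, hx, by rw [hxm]; exact hml, rfl⟩))
        exact ⟨x, x₀ ++ y₁, _, g, rfl, hg, .cons (GFA.Step.right hrule) hch'⟩
      · have hrule : (none, mid, stM M pd sd hpI hsI q₀ t) ∈ ruleR' M :=
          Or.inr (Or.inr (Or.inr ⟨x₀, q₀, t, mid, pd, sd, hpI, hsI, hx, hxe, hpne,
            hpl, hml, rfl⟩))
        obtain ⟨lsg, hseg⟩ := segL pd sd hpI hsI hpl hpne q₀ t x y₁
        refine ⟨x ++ pd, mid ++ (sd ++ y₁), _, g, ?_, hg,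
          .cons (GFA.Step.right hrule) (hseg.append hch')⟩
        rw [hxe]
        simp [List.append_assoc]

variable (M)

end Construction

lemma M'_simple : (M' M).Simple := by
  constructor
  · rintro r (⟨q, t, a', c, b, p, ha', hb, hP, rfl⟩ |
      ⟨a'', c, b, p, t, ha, ha', hb, hl, rfl⟩ |
      ⟨x, q, t, hx, hxl, rfl⟩ | ⟨x, q, t, mid, p, s, hp, hs, hx, hxe, hpne, hpl, hml, rfl⟩)
    · simp
    · simp
    · exact hxl
    · exact hml
  · rintro r (⟨c, p, t, hn, hb', rfl⟩ |
      ⟨a, c, brem, p, t, ha, hb, hb', hane, hl, rfl⟩ |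
      ⟨x, q, t, hx, hxl, rfl⟩ | ⟨x, q, t, mid, p, s, hp, hs, hx, hxe, hpne, hpl, hml, rfl⟩)
    · simp
    · simp
    · exact hxl
    · exact hml

lemma M'_noreturnL : ∀ r ∈ (M' M).ruleL, r.2.2 ≠ (M' M).start := by
  rintro r (⟨q, t, a', c, b, p, ha', hb, hP, rfl⟩ |
    ⟨a'', c, b, p, t, ha, ha', hb, hl, rfl⟩ |
    ⟨x, q, t, hx, hxl, rfl⟩ | ⟨x, q, t, mid, p, s, hp, hs, hx, hxe, hpne, hpl, hml, rfl⟩)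
  · exact stM_ne_none
  · exact stM_ne_none
  · exact stA_ne_none
  · exact stM_ne_none

lemma M'_noreturnR : ∀ r ∈ (M' M).ruleR, r.2.2 ≠ (M' M).start := by
  rintro r (⟨c, p, t, hn, hb', rfl⟩ |
    ⟨a, c, brem, p, t, ha, hb, hb', hane, hl, rfl⟩ |
    ⟨x, q, t, hx, hxl, rfl⟩ | ⟨x, q, t, mid, p, s, hp, hs, hx, hxe, hpne, hpl, hml, rfl⟩)
  · exact stA_ne_none
  · exact stM_ne_none
  · exact stA_ne_none
  · exact stM_ne_none

lemma M'_epsL : ∀ r ∈ (M' M).ruleL, r.1 = ([] : List T) → r.2.1 = (M' M).start := by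
  rintro r (⟨q, t, a', c, b, p, ha', hb, hP, rfl⟩ |
    ⟨a'', c, b, p, t, ha, ha', hb, hl, rfl⟩ |
    ⟨x, q, t, hx, hxl, rfl⟩ | ⟨x, q, t, mid, p, s, hp, hs, hx, hxe, hpne, hpl, hml, rfl⟩) <;>
    intro h
  · simp at h
  · simp at h
  · rfl
  · rfl

lemma M'_epsR : ∀ r ∈ (M' M).ruleR, r.2.1 = ([] : List T) → r.1 = (M' M).start := by
  rintro r (⟨c, p, t, hn, hb', rfl⟩ |
    ⟨a, c, brem, p, t, ha, hb, hb', hane, hl, rfl⟩ |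
    ⟨x, q, t, hx, hxl, rfl⟩ | ⟨x, q, t, mid, p, s, hp, hs, hx, hxe, hpne, hpl, hml, rfl⟩) <;>
    intro h
  · simp at h
  · simp at h
  · rfl
  · rfl


theorem initeven_ietwgfa_to_ietwsfa {T : Type} (M : GFA T) :
    ∃ M' : GFA T, M'.Simple ∧
      (∀ r ∈ M'.ruleL, r.2.2 ≠ M'.start) ∧
      (∀ r ∈ M'.ruleR, r.2.2 ≠ M'.start) ∧
      (∀ r ∈ M'.ruleL, r.1 = ([] : List T) → r.2.1 = M'.start) ∧
      (∀ r ∈ M'.ruleR, r.2.1 = ([] : List T) → r.1 = M'.start) ∧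
      M'.lang = M'.langInitEven ∧ M'.langInitEven = M.langInitEven :=
  ⟨M' M, M'_simple, M'_noreturnL, M'_noreturnR, M'_epsL, M'_epsR, langM'_eq_init,
    langM'_eq_init ▸ langM'_eq⟩

end IETW
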